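/- If C = −P^{-1} Q with P = Γ^{-1} + B^T M B + B^T Σ^{-1} B and Q = B^T M A + B^T Σ^{-1} A, and M satisfies M = A^T Σ^{-1} A + A^T M A − Q^T P^{-1} Q, then the Lyapunov-type equation C^T Γ^{-1} C + (A+BC)^T Σ^{-1}(A+BC) + (A+BC)^T M (A+BC) − M = 0 holds. -/
import Mathlib


open Matrix

/-- Verification step of Theorem 1: with `C = -P⁻¹ Q` and `M` solving the
Riccati equation `M = Aᵀ Σ⁻¹ A + Aᵀ M A - Qᵀ P⁻¹ Q`, the Lyapunov-type
equation holds. -/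
theorem stmt11 {n m : ℕ}
    (A : Matrix (Fin n) (Fin n) ℝ) (B : Matrix (Fin n) (Fin m) ℝ)
    (Γ : Matrix (Fin m) (Fin m) ℝ) (Sig M : Matrix (Fin n) (Fin n) ℝ)
    (hΓ : Γ.PosDef) (hSig : Sig.PosDef) (hM : M.PosDef)
    (P : Matrix (Fin m) (Fin m) ℝ) (Q : Matrix (Fin m) (Fin n) ℝ)
    (hP : P = Γ⁻¹ + Bᵀ * M * B + Bᵀ * Sig⁻¹ * B)
    (hQ : Q = Bᵀ * M * A + Bᵀ * Sig⁻¹ * A)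
    (C : Matrix (Fin m) (Fin n) ℝ) (hC : C = -P⁻¹ * Q)
    (hRic : M = Aᵀ * Sig⁻¹ * A + Aᵀ * M * A - Qᵀ * P⁻¹ * Q) :
    Cᵀ * Γ⁻¹ * C + (A + B * C)ᵀ * Sig⁻¹ * (A + B * C)
      + (A + B * C)ᵀ * M * (A + B * C) - M = 0 := by
  have hBt : Bᵀ = Bᴴ := (conjTranspose_eq_transpose_of_trivial B).symm
  have hPpd : P.PosDef := by
    rw [hP]
    exact (hΓ.inv.add_posSemidef (by rw [hBt]; exact hM.posSemidef.conjTranspose_mul_mul_same B)).add_posSemidef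
      (by rw [hBt]; exact hSig.inv.posSemidef.conjTranspose_mul_mul_same B)
  have hdet : IsUnit P.det := isUnit_iff_ne_zero.mpr hPpd.det_pos.ne'
  have hPsymm : Pᵀ = P := by
    have := hPpd.isHermitian
    rwa [IsHermitian, conjTranspose_eq_transpose_of_trivial] at this
  have hMs : Mᵀ = M := by
    have := hM.isHermitian; rwa [IsHermitian, conjTranspose_eq_transpose_of_trivial] at this
  have hSs : (Sig⁻¹)ᵀ = Sig⁻¹ := by
    have := hSig.inv.isHermitian
    rwa [IsHermitian, conjTranspose_eq_transpose_of_trivial] at this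
  have hQt : Qᵀ = Aᵀ * M * B + Aᵀ * Sig⁻¹ * B := by
    rw [hQ]; simp [transpose_add, transpose_mul, hMs, hSs, Matrix.mul_assoc]
  -- P * C = -Q
  have hPC : P * C = -Q := by
    rw [hC, Matrix.neg_mul, Matrix.mul_neg, ← Matrix.mul_assoc,
      mul_nonsing_inv P hdet, Matrix.one_mul]
  have hCP : Cᵀ * P * C = -(Cᵀ * Q) := by
    rw [Matrix.mul_assoc, hPC, Matrix.mul_neg]
  have hQC : Qᵀ * C = -(Qᵀ * P⁻¹ * Q) := by
    rw [hC, Matrix.neg_mul, Matrix.mul_neg, Matrix.mul_assoc]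
  have hRic2 : Aᵀ * Sig⁻¹ * A + Aᵀ * M * A - M = Qᵀ * P⁻¹ * Q := by
    nth_rewrite 2 [hRic]
    abel
  have expand : Cᵀ * Γ⁻¹ * C + (A + B * C)ᵀ * Sig⁻¹ * (A + B * C)
      + (A + B * C)ᵀ * M * (A + B * C) - M
      = Cᵀ * P * C + Qᵀ * C + Cᵀ * Q
        + (Aᵀ * Sig⁻¹ * A + Aᵀ * M * A) - M := by
    rw [hP, hQt, hQ]
    simp only [transpose_add, transpose_mul, Matrix.mul_add, Matrix.add_mul,
      Matrix.mul_assoc]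
    abel
  rw [expand, hCP, hQC, ← hRic2]
  abel
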